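/- Let ψ: ℕ → (0, 1/4) and q ∈ ℕ with q ≥ 1. Then A_q ⊆ ⋃_{j ∈ I_q} R_{q,j}, where A_q = {(x₁,x₂) ∈ [0,1]² : ‖qx₁‖·‖qx₂‖ < ψ(q)}, R_{q,j} = {(x₁,x₂) ∈ [0,1]² : ‖qx₁‖ < q·2^{−(j−1)} and ‖qx₂‖ < ψ(q)·2^j/q}, and I_q = {j ∈ ℕ : 2q ≤ 2^j ≤ q/ψ(q)}. -/

import Mathlib

/-- Distance from a real number to the nearest integer. -/
noncomputable def nint (x : ℝ) : ℝ := |x - round x|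

/-- `A_q = {(x₁,x₂) ∈ [0,1]² : ‖qx₁‖·‖qx₂‖ < ψ(q)}`. -/
def Aq (ψ : ℕ → ℝ) (q : ℕ) : Set (ℝ × ℝ) :=
  {x | x.1 ∈ Set.Icc (0 : ℝ) 1 ∧ x.2 ∈ Set.Icc (0 : ℝ) 1 ∧
    nint (q * x.1) * nint (q * x.2) < ψ q}

/-- `R_{q,j} = {(x₁,x₂) ∈ [0,1]² : ‖qx₁‖ < q·2^{-(j-1)}, ‖qx₂‖ < ψ(q)·2^j/q}`. -/
def Rqj (ψ : ℕ → ℝ) (q j : ℕ) : Set (ℝ × ℝ) :=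
  {x | x.1 ∈ Set.Icc (0 : ℝ) 1 ∧ x.2 ∈ Set.Icc (0 : ℝ) 1 ∧
    nint (q * x.1) < q * (2 : ℝ) ^ (-((j : ℝ) - 1)) ∧
    nint (q * x.2) < ψ q * (2 : ℝ) ^ (j : ℝ) / q}

/-- `I_q = {j ∈ ℕ : 2q ≤ 2^j ≤ q/ψ(q)}`. -/
def Iq (ψ : ℕ → ℝ) (q : ℕ) : Set ℕ :=
  {j | 2 * (q : ℝ) ≤ (2 : ℝ) ^ (j : ℝ) ∧ (2 : ℝ) ^ (j : ℝ) ≤ q / ψ q}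

/-- The covering `A_q ⊆ ⋃_{j ∈ I_q} R_{q,j}`. -/
theorem Aq_subset_union_Rqj (ψ : ℕ → ℝ) (hψ : ∀ q, 0 < ψ q ∧ ψ q < 1 / 4)
    (q : ℕ) (hq : 1 ≤ q) :
    Aq ψ q ⊆ ⋃ j ∈ Iq ψ q, Rqj ψ q j := by
  classical
  rintro ⟨x₁, x₂⟩ ⟨hx₁, hx₂, hlt⟩
  obtain ⟨hψ0, hψ4⟩ := hψ q
  have hq0 : (0 : ℝ) < q := by exact_mod_cast hq
  set d₁ := nint (q * x₁) with hd₁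
  set d₂ := nint (q * x₂) with hd₂
  have hd₁0 : 0 ≤ d₁ := abs_nonneg _
  have hd₂0 : 0 ≤ d₂ := abs_nonneg _
  have hd₁h : d₁ ≤ 1 / 2 := abs_sub_round _
  have hd₂h : d₂ ≤ 1 / 2 := abs_sub_round _
  set P : ℕ → Prop := fun j => d₁ * 2 ^ j < 2 * q ∧ (2 : ℝ) ^ j ≤ q / ψ q with hP
  have hqψ : 4 * (q : ℝ) < q / ψ q := by
    rw [lt_div_iff₀ hψ0]; nlinarith
  set N := ⌈(q : ℝ) / ψ q⌉₊ with hN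
  have hNge : (q : ℝ) / ψ q ≤ N := Nat.le_ceil _
  have hq1 : (1 : ℝ) ≤ q := by exact_mod_cast hq
  have hP1 : P 1 := by
    constructor
    · push_cast; nlinarith
    · push_cast; nlinarith
  have h1N : 1 ≤ N := Nat.ceil_pos.mpr (by positivity)
  set j := Nat.findGreatest P N with hj
  have hj1 : 1 ≤ j := Nat.le_findGreatest h1N hP1
  have hPj : P j := Nat.findGreatest_spec h1N hP1
  have h2j : (0 : ℝ) < 2 ^ j := by positivity
  have hnot : ¬ P (j + 1) := by
    rcases le_or_gt (j + 1) N with h | h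
    · exact Nat.findGreatest_is_greatest (Nat.lt_succ_self j) h
    · intro hPc
      have h2 : ((j + 1 : ℕ) : ℝ) < 2 ^ (j + 1) := by
        exact_mod_cast (Nat.lt_two_pow_self (n := j + 1))
      have h3 : (N : ℝ) < ((j + 1 : ℕ) : ℝ) := by exact_mod_cast h
      have := hPc.2
      push_cast at h2 h3 ⊢
      linarith
  -- case analysis from ¬P (j+1)
  have hcase : (q : ℝ) ≤ d₁ * 2 ^ j ∨ (q : ℝ) / ψ q < 2 ^ (j + 1) := by
    by_contra h
    push_neg at h
    refine hnot ⟨?_, h.2⟩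
    have h1 := h.1
    rw [pow_succ]
    nlinarith
  have hrpow : (2 : ℝ) ^ ((j : ℕ) : ℝ) = 2 ^ j := Real.rpow_natCast 2 j
  -- 2q ≤ 2^j
  have hlow : 2 * (q : ℝ) ≤ 2 ^ j := by
    rcases hcase with hA | hB
    · nlinarith
    · rw [pow_succ] at hB; nlinarith
  -- condition 2
  have hcond2 : d₂ * q < ψ q * 2 ^ j := by
    rcases hcase with hA | hB
    · have hd₁pos : 0 < d₁ := by nlinarith
      have h1 : d₂ * q ≤ d₂ * (d₁ * 2 ^ j) :=
        mul_le_mul_of_nonneg_left hA hd₂0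
      nlinarith
    · rw [div_lt_iff₀ hψ0, pow_succ] at hB
      nlinarith
  refine Set.mem_iUnion₂.mpr ⟨j, ⟨?_, ?_⟩, hx₁, hx₂, ?_, ?_⟩
  · rw [hrpow]; exact hlow
  · rw [hrpow]; exact hPj.2
  · have heq : (2 : ℝ) ^ (-((j : ℝ) - 1)) = 2 / 2 ^ j := by
      rw [neg_sub, Real.rpow_sub (by norm_num), Real.rpow_one, Real.rpow_natCast]
    rw [heq, show (q : ℝ) * (2 / 2 ^ j) = 2 * q / 2 ^ j by ring, lt_div_iff₀ h2j]
    exact hPj.1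
  · rw [hrpow, lt_div_iff₀ hq0]
    exact hcond2
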